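/- For n = 2, the condition ∫₀ (u(t)/u'(t)) dt/t² = ∞ with u = φ⁻¹ is equivalent to the Jones–Makarov condition ∫₀ |log φ(t)/log t|² dt/t = ∞, for any weight function φ satisfying the regularity assumptions that φ is increasing, differentiable, doubling, and φ'(t)t log t/(φ(t) log φ(t)) is monotone. -/

import Mathlib

open Filter Set Real MeasureTheory intervalIntegral

set_option maxHeartbeats 1000000

lemma Ioo_mem_nhdsWithin_Ioi {a b c : ℝ} (H : b ∈ Ico a c) : Ioo a c ∈ nhdsWithin b (Ioi b) :=
  Ioo_mem_nhdsGT_of_mem H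

/-- Divergence-to-infinity of `∫_δ^c w` as `δ → 0⁺`. -/
def TT (w : ℝ → ℝ) (c : ℝ) : Prop :=
  Filter.Tendsto (fun δ => ∫ x in δ..c, w x) (nhdsWithin 0 (Ioi 0)) Filter.atTop

lemma TT_congr_upper {w : ℝ → ℝ} {c₁ c₂ : ℝ} (h1 : 0 < c₁) (h2 : c₁ ≤ c₂)
    (hint : ∀ δ, 0 < δ → δ ≤ c₁ → IntervalIntegrable w volume δ c₂) :
    (TT w c₁ ↔ TT w c₂) := by
  have hK : IntervalIntegrable w volume c₁ c₂ := hint c₁ h1 le_rfl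
  have hEq : (fun δ => ∫ x in δ..c₂, w x) =ᶠ[nhdsWithin 0 (Ioi 0)]
      (fun δ => (∫ x in δ..c₁, w x) + ∫ x in c₁..c₂, w x) := by
    filter_upwards [Ioo_mem_nhdsWithin_Ioi (by exact ⟨le_rfl, h1⟩ : (0:ℝ) ∈ Ico 0 c₁)] with δ hδ
    have hab : IntervalIntegrable w volume δ c₁ :=
      (hint δ hδ.1 hδ.2.le).mono_set (by
        rw [uIcc_of_le hδ.2.le, uIcc_of_le (hδ.2.le.trans h2)]
        exact Icc_subset_Icc le_rfl h2)
    have hbc : IntervalIntegrable w volume c₁ c₂ := hK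
    rw [integral_add_adjacent_intervals hab hbc]
  constructor
  · intro h
    refine Tendsto.congr' hEq.symm ?_
    exact tendsto_atTop_add_const_right _ _ h
  · intro h
    have h' := Tendsto.congr' hEq h
    have := tendsto_atTop_add_const_right (nhdsWithin (0:ℝ) (Ioi 0)) (-(∫ x in c₁..c₂, w x)) h'
    simpa [TT] using this

lemma TT_mono {w₁ w₂ : ℝ → ℝ} {c : ℝ} (hc : 0 < c)
    (h1 : ∀ δ, 0 < δ → δ ≤ c → IntervalIntegrable w₁ volume δ c)
    (h2 : ∀ δ, 0 < δ → δ ≤ c → IntervalIntegrable w₂ volume δ c)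
    (hle : ∀ t ∈ Ioc (0:ℝ) c, w₁ t ≤ w₂ t) : TT w₁ c → TT w₂ c := by
  intro h
  apply tendsto_atTop_mono' _ _ h
  filter_upwards [Ioo_mem_nhdsWithin_Ioi (⟨le_rfl, hc⟩ : (0:ℝ) ∈ Ico 0 c)] with δ hδ
  exact integral_mono_on hδ.2.le (h1 δ hδ.1 hδ.2.le) (h2 δ hδ.1 hδ.2.le)
    (fun x hx => hle x ⟨lt_of_lt_of_le hδ.1 hx.1, hx.2⟩)

lemma not_TT_of_bounded {w : ℝ → ℝ} {c K : ℝ} (hc : 0 < c)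
    (hbd : ∀ δ, 0 < δ → δ < c → (∫ x in δ..c, w x) ≤ K) : ¬ TT w c := by
  intro h
  obtain ⟨δ, h1, h2⟩ :=
    ((h.eventually (eventually_ge_atTop (K+1))).and
      (Ioo_mem_nhdsWithin_Ioi (⟨le_rfl, hc⟩ : (0:ℝ) ∈ Ico 0 c))).exists
  have := hbd δ h2.1 h2.2
  linarith

lemma TT_log_sq {c : ℝ} (h0 : 0 < c) (h1 : c < 1) :
    TT (fun t => Real.log t ^ 2 / t) c := by
  have key : ∀ δ ∈ Ioo (0:ℝ) c, (∫ x in δ..c, Real.log x ^ 2 / x)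
      = Real.log c ^ 3 / 3 - Real.log δ ^ 3 / 3 := by
    intro δ hδ
    have hD : ∀ x ∈ uIcc δ c, HasDerivAt (fun t => Real.log t ^ 3 / 3) (Real.log x ^ 2 / x) x := by
      intro x hx
      rw [uIcc_of_le hδ.2.le] at hx
      have hx0 : x ≠ 0 := (lt_of_lt_of_le hδ.1 hx.1).ne'
      have := ((Real.hasDerivAt_log hx0).pow 3).div_const 3
      convert this using 1
      all_goals try rfl
      field_simp
      ring
    rw [intervalIntegral.integral_eq_sub_of_hasDerivAt hD ?_]
    apply ContinuousOn.intervalIntegrable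
    apply ContinuousOn.div
    · exact (Real.continuousOn_log.mono (fun x hx => by
        rw [uIcc_of_le hδ.2.le] at hx
        exact ne_of_gt (lt_of_lt_of_le hδ.1 hx.1))).pow 2
    · exact continuousOn_id
    · intro x hx
      rw [uIcc_of_le hδ.2.le] at hx
      exact ne_of_gt (lt_of_lt_of_le hδ.1 hx.1)
  have hT : Tendsto (fun δ : ℝ => Real.log c ^ 3 / 3 - Real.log δ ^ 3 / 3)
      (nhdsWithin 0 (Ioi 0)) atTop := by
    have h2 : Tendsto (fun δ : ℝ => -Real.log δ) (nhdsWithin 0 (Ioi 0)) atTop :=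
      tendsto_neg_atBot_atTop.comp Real.tendsto_log_nhdsGT_zero
    have h3 : Tendsto (fun δ : ℝ => (-Real.log δ) ^ 3) (nhdsWithin 0 (Ioi 0)) atTop :=
      (tendsto_pow_atTop (by norm_num)).comp h2
    have h4 : Tendsto (fun δ : ℝ => (-Real.log δ) ^ 3 / 3 + Real.log c ^ 3 / 3)
        (nhdsWithin 0 (Ioi 0)) atTop :=
      tendsto_atTop_add_const_right _ _ (h3.atTop_div_const (by norm_num))
    refine h4.congr (fun δ => by ring)
  refine Tendsto.congr' ?_ hT
  filter_upwards [Ioo_mem_nhdsWithin_Ioi (⟨le_rfl, h0⟩ : (0:ℝ) ∈ Ico 0 c)] with δ hδ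
  exact (key δ hδ).symm

lemma TT_const_mul_iff {w : ℝ → ℝ} {c k : ℝ} (hk : 0 < k) :
    TT (fun t => k * w t) c ↔ TT w c := by
  unfold TT
  have hEq : ∀ δ : ℝ, (∫ x in δ..c, k * w x) = k * ∫ x in δ..c, w x := by
    intro δ; exact intervalIntegral.integral_const_mul k w
  simp_rw [hEq]
  exact tendsto_const_mul_atTop_of_pos hk


/-- For `n = 2`, the condition `∫₀ (u(t)/u'(t)) dt/t² = ∞` with
`u = φ⁻¹` is equivalent to the Jones–Makarov condition
`∫₀ |log φ(t)/log t|² dt/t = ∞`, for any weight function `φ` which is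
increasing, differentiable, doubling, and such that
`φ'(t) t log t/(φ(t) log φ(t))` is monotone. -/
theorem stmt5
    (t₀ β r₀ : ℝ) (ht₀ : 0 < t₀) (ht₀1 : t₀ < 1) (hβ : 1 < β)
    (hr₀ : 0 < r₀) (hr₀t₀ : r₀ < t₀)
    (φ u : ℝ → ℝ)
    (hpos : ∀ t ∈ Ioo 0 t₀, 0 < φ t ∧ φ t < 1)
    (hmono : StrictMonoOn φ (Ioo 0 t₀))
    (hdiff : ∀ t ∈ Ioo 0 t₀, DifferentiableAt ℝ φ t)
    (hlim : Tendsto φ (nhdsWithin 0 (Ioi 0)) (nhds 0))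
    (hdoub : ∀ᶠ t in nhdsWithin 0 (Ioi 0), φ (2 * t) ≤ β * φ t)
    (hreg : MonotoneOn
        (fun t => deriv φ t * t * Real.log t / (φ t * Real.log (φ t)))
        (Ioo 0 t₀) ∨
      AntitoneOn
        (fun t => deriv φ t * t * Real.log t / (φ t * Real.log (φ t)))
        (Ioo 0 t₀))
    (hu_inv : ∀ t ∈ Ioo 0 t₀, φ (u t) = t ∧ u (φ t) = t ∧ u t ∈ Ioo 0 t₀)
    (hu_diff : ∀ t ∈ Ioo 0 t₀, DifferentiableAt ℝ u t)
    (hu_deriv_pos : ∀ t ∈ Ioo 0 t₀, 0 < deriv u t) :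
    Tendsto (fun ε => ∫ t in ε..r₀, (u t / deriv u t) / t ^ 2)
        (nhdsWithin 0 (Ioi 0)) atTop
      ↔ Tendsto (fun ε => ∫ t in ε..r₀, |Real.log (φ t) / Real.log t| ^ 2 / t)
          (nhdsWithin 0 (Ioi 0)) atTop := by
  set I : Set ℝ := Ioo 0 t₀ with hI
  -- continuity of φ on I
  have hφc : ContinuousOn φ I := fun t ht => ((hdiff t ht).continuousAt).continuousWithinAt
  have hlt1 : ∀ t ∈ I, t < 1 := fun t ht => ht.2.trans ht₀1
  have hlogt : ∀ t ∈ I, Real.log t < 0 := fun t ht => Real.log_neg ht.1 (hlt1 t ht)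
  have hlogφ : ∀ t ∈ I, Real.log (φ t) < 0 :=
    fun t ht => Real.log_neg (hpos t ht).1 (hpos t ht).2
  -- deriv φ nonneg
  have hderiv_nonneg : ∀ t ∈ I, 0 ≤ deriv φ t := by
    intro t ht
    have hd := (hdiff t ht).hasDerivAt
    rw [hasDerivAt_iff_tendsto_slope] at hd
    have hd' : Tendsto (slope φ t) (nhdsWithin t (Ioi t)) (nhds (deriv φ t)) :=
      hd.mono_left (nhdsWithin_mono t (fun x hx => ne_of_gt hx))
    refine ge_of_tendsto hd' ?_
    filter_upwards [Ioo_mem_nhdsWithin_Ioi (⟨le_rfl, ht.2⟩ : t ∈ Ico t t₀)] with x hx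
    have hxI : x ∈ I := ⟨ht.1.trans hx.1, hx.2⟩
    rw [slope_def_field]
    apply div_nonneg _ (by linarith [hx.1])
    have := hmono ht hxI hx.1
    linarith
  -- u is strictly monotone on I
  have husm : StrictMonoOn u I := by
    intro a ha b hb hab
    by_contra hle
    push_neg at hle
    rcases eq_or_lt_of_le hle with heq | hlt
    · have : φ (u b) = φ (u a) := by rw [heq]
      rw [(hu_inv a ha).1, (hu_inv b hb).1] at this
      exact absurd this.symm (ne_of_lt hab)
    · have := hmono (hu_inv b hb).2.2 (hu_inv a ha).2.2 hlt
      rw [(hu_inv a ha).1, (hu_inv b hb).1] at this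
      exact absurd hab (not_lt.2 this.le)
  -- u tends to 0 from the right
  have hu0 : Tendsto u (nhdsWithin 0 (Ioi 0)) (nhdsWithin 0 (Ioi 0)) := by
    rw [tendsto_nhdsWithin_iff]
    constructor
    · rw [tendsto_order]
      constructor
      · intro a ha
        filter_upwards [Ioo_mem_nhdsWithin_Ioi (⟨le_rfl, ht₀⟩ : (0:ℝ) ∈ Ico 0 t₀)] with ε hε
        exact lt_of_lt_of_le ha ((hu_inv ε hε).2.2.1.le)
      · intro b hb
        set η := min b t₀ / 2 with hη
        have hmbt : 0 < min b t₀ := lt_min hb ht₀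
        have hηI : η ∈ I := ⟨by positivity, by
          have h1 : min b t₀ ≤ t₀ := min_le_right _ _
          rw [hη]; linarith⟩
        have hηb : η < b := by
          have h1 : min b t₀ ≤ b := min_le_left _ _
          rw [hη]; linarith
        have hφη : 0 < φ η := (hpos η hηI).1
        filter_upwards [Ioo_mem_nhdsWithin_Ioi
          (⟨le_rfl, lt_min hφη ht₀⟩ : (0:ℝ) ∈ Ico 0 (min (φ η) t₀))] with ε hε
        have hεI : ε ∈ I := ⟨hε.1, lt_of_lt_of_le hε.2 (min_le_right _ _)⟩
        have huε := (hu_inv ε hεI).2.2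
        have hlt : u ε < η := by
          by_contra hge
          push_neg at hge
          have h2 := hmono.monotoneOn hηI huε hge
          rw [(hu_inv ε hεI).1] at h2
          have h3 : ε < φ η := lt_of_lt_of_le hε.2 (min_le_left _ _)
          linarith
        linarith
    · filter_upwards [Ioo_mem_nhdsWithin_Ioi (⟨le_rfl, ht₀⟩ : (0:ℝ) ∈ Ico 0 t₀)] with ε hε
      exact (hu_inv ε hε).2.2.1
  -- chain rule
  have hchain : ∀ t ∈ I, deriv φ (u t) * deriv u t = 1 := by
    intro t ht
    have hut := (hu_inv t ht).2.2
    have h1 : HasDerivAt (φ ∘ u) (deriv φ (u t) * deriv u t) t :=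
      (hdiff _ hut).hasDerivAt.comp t (hu_diff t ht).hasDerivAt
    have h2 : (φ ∘ u) =ᶠ[nhds t] id := by
      filter_upwards [isOpen_Ioo.mem_nhds ht] with x hx
      exact (hu_inv x hx).1
    have h3 : HasDerivAt id (deriv φ (u t) * deriv u t) t := h1.congr_of_eventuallyEq h2.symm
    have h4 := h3.deriv
    simpa using h4.symm
  set g : ℝ → ℝ := fun t => deriv φ t * t * Real.log t / (φ t * Real.log (φ t)) with hg
  set w₂ : ℝ → ℝ := fun t => |Real.log (φ t) / Real.log t| ^ 2 / t with hw₂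
  set hfun : ℝ → ℝ := fun s => s * (deriv φ s) ^ 2 / (φ s) ^ 2 with hhfun
  -- g nonneg
  have hg_nonneg : ∀ t ∈ I, 0 ≤ g t := by
    intro t ht
    rw [hg]
    rw [div_nonneg_iff]
    right
    constructor
    · have h5 : 0 ≤ deriv φ t * t := mul_nonneg (hderiv_nonneg t ht) ht.1.le
      nlinarith [mul_nonneg h5 (neg_nonneg.2 (hlogt t ht).le)]
    · nlinarith [(hpos t ht).1, hlogφ t ht]
  -- expressing deriv φ via g
  have hgid : ∀ t ∈ I, deriv φ t = g t * (φ t * Real.log (φ t)) / (t * Real.log t) := by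
    intro t ht
    have h1 : φ t ≠ 0 := ne_of_gt (hpos t ht).1
    have h2 : Real.log (φ t) ≠ 0 := ne_of_lt (hlogφ t ht)
    have h3 : Real.log t ≠ 0 := ne_of_lt (hlogt t ht)
    have h4 : t ≠ 0 := ne_of_gt ht.1
    rw [hg]
    field_simp
  -- hfun = g^2 * w₂
  have h_eq : ∀ t ∈ I, hfun t = g t ^ 2 * w₂ t := by
    intro t ht
    have h1 : φ t ≠ 0 := ne_of_gt (hpos t ht).1
    have h2 : Real.log (φ t) ≠ 0 := ne_of_lt (hlogφ t ht)
    have h3 : Real.log t ≠ 0 := ne_of_lt (hlogt t ht)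
    have h4 : t ≠ 0 := ne_of_gt ht.1
    rw [hhfun, hg, hw₂]
    simp only [sq_abs]
    field_simp
  -- w₂ nonneg
  have hw₂_nonneg : ∀ t ∈ I, 0 ≤ w₂ t := by
    intro t ht
    have h0 : 0 < t := ht.1
    rw [hw₂]
    positivity
  -- hfun nonneg
  have hhfun_nonneg : ∀ t, 0 ≤ t → 0 ≤ hfun t := by
    intro t ht
    rw [hhfun]
    apply div_nonneg _ (by positivity)
    nlinarith [sq_nonneg (deriv φ t)]
  -- g bounded on compact subintervals
  have hgbd : ∀ a b, a ∈ I → b ∈ I → ∀ t ∈ Icc a b, g t ≤ max (g a) (g b) := by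
    intro a b ha hb t htab
    have ht : t ∈ I := ⟨lt_of_lt_of_le ha.1 htab.1, lt_of_le_of_lt htab.2 hb.2⟩
    rcases hreg with H | H
    · exact le_max_of_le_right (H ht hb htab.2)
    · exact le_max_of_le_left (H ha ht htab.1)
  -- φ' bounded on compact subintervals
  have hφ'bd : ∀ a b, a ∈ I → b ∈ I → a ≤ b → ∃ K, ∀ t ∈ Icc a b, |deriv φ t| ≤ K := by
    intro a b ha hb hab
    refine ⟨max (g a) (g b) * ((-Real.log (φ a)) / (a * (-Real.log b))), ?_⟩
    intro t htab
    have ht : t ∈ I := ⟨lt_of_lt_of_le ha.1 htab.1, lt_of_le_of_lt htab.2 hb.2⟩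
    rw [abs_of_nonneg (hderiv_nonneg t ht), hgid t ht]
    have e1 : g t * (φ t * Real.log (φ t)) / (t * Real.log t)
        = g t * ((φ t * (-Real.log (φ t))) / (t * (-Real.log t))) := by
      rw [mul_div_assoc]
      congr 1
      rw [← neg_div_neg_eq]
      ring_nf
    rw [e1]
    have hgt0 := hg_nonneg t ht
    have hKg : g t ≤ max (g a) (g b) := hgbd a b ha hb t htab
    have hφta : φ a ≤ φ t := by
      rcases eq_or_lt_of_le htab.1 with h | h
      · rw [← h]
      · exact (hmono ha ht h).le
    have hnum : φ t * (-Real.log (φ t)) ≤ -Real.log (φ a) := by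
      have hb1 : -Real.log (φ t) ≤ -Real.log (φ a) := by
        have := Real.log_le_log (hpos a ha).1 hφta
        linarith
      nlinarith [(hpos t ht).1, (hpos t ht).2, hlogφ t ht, hlogφ a ha]
    have hden : a * (-Real.log b) ≤ t * (-Real.log t) := by
      have h1 : -Real.log b ≤ -Real.log t := by
        have := Real.log_le_log ht.1 htab.2
        linarith
      have h2 : 0 < -Real.log b := by have := hlogt b hb; linarith
      nlinarith [htab.1, ha.1]
    have hdenpos : 0 < a * (-Real.log b) := by
      have := hlogt b hb; nlinarith [ha.1]
    have hc0 : 0 ≤ φ t * -Real.log (φ t) / (t * -Real.log t) := by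
      apply div_nonneg
      · nlinarith [(hpos t ht).1, hlogφ t ht]
      · nlinarith [ht.1, hlogt t ht]
    apply mul_le_mul hKg _ hc0 (le_trans hgt0 hKg)
    apply div_le_div₀ _ hnum hdenpos hden
    have := hlogφ a ha; linarith
  -- generic: bounded + measurable → interval integrable
  have hIntBdd : ∀ (w : ℝ → ℝ) (a b : ℝ), a ≤ b →
      AEStronglyMeasurable w (volume.restrict (Ioc a b)) →
      (∃ K, ∀ t ∈ Ioc a b, |w t| ≤ K) → IntervalIntegrable w volume a b := by
    rintro w a b hab hm ⟨K, hK⟩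
    rw [intervalIntegrable_iff, uIoc_of_le hab]
    refine ⟨hm, ?_⟩
    apply HasFiniteIntegral.restrict_of_bounded (C := K) measure_Ioc_lt_top
    exact (ae_restrict_iff' measurableSet_Ioc).2
      (ae_of_all _ (fun t ht => by simpa [Real.norm_eq_abs] using hK t ht))
  have hsubI : ∀ a b : ℝ, a ∈ I → b ∈ I → Ioc a b ⊆ I :=
    fun a b ha hb x hx => ⟨ha.1.trans hx.1, lt_of_le_of_lt hx.2 hb.2⟩
  have hφm : ∀ a b : ℝ, a ∈ I → b ∈ I → AEMeasurable φ (volume.restrict (Ioc a b)) :=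
    fun a b ha hb => (hφc.mono (hsubI a b ha hb)).aemeasurable measurableSet_Ioc
  have hgm : ∀ a b : ℝ, a ∈ I → b ∈ I → AEMeasurable g (volume.restrict (Ioc a b)) := by
    intro a b ha hb
    have h1 := hφm a b ha hb
    have h2 : AEMeasurable (fun t => Real.log (φ t)) (volume.restrict (Ioc a b)) :=
      Real.measurable_log.comp_aemeasurable h1
    rw [hg]
    exact (((measurable_deriv φ).aemeasurable.mul aemeasurable_id).mul
      Real.measurable_log.aemeasurable).div (h1.mul h2)
  -- w₂ continuous on compact subintervals
  have hw₂cont : ∀ a b : ℝ, a ∈ I → b ∈ I → a ≤ b → ContinuousOn w₂ (Icc a b) := by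
    intro a b ha hb hab
    have hsub : Icc a b ⊆ I := fun x hx => ⟨lt_of_lt_of_le ha.1 hx.1, lt_of_le_of_lt hx.2 hb.2⟩
    rw [hw₂]
    apply ContinuousOn.div _ continuousOn_id (fun x hx => ne_of_gt (hsub hx).1)
    apply ContinuousOn.pow
    apply ContinuousOn.abs
    apply ContinuousOn.div
    · exact ContinuousOn.log (hφc.mono hsub) (fun x hx => ne_of_gt (hpos x (hsub hx)).1)
    · exact Real.continuousOn_log.mono (fun x hx => ne_of_gt (hsub hx).1)
    · exact fun x hx => ne_of_lt (hlogt x (hsub hx))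
  have hw₂int : ∀ a b : ℝ, a ∈ I → b ∈ I → a ≤ b → IntervalIntegrable w₂ volume a b := by
    intro a b ha hb hab
    apply ContinuousOn.intervalIntegrable
    rw [uIcc_of_le hab]
    exact hw₂cont a b ha hb hab
  have hw₂m : ∀ a b : ℝ, a ∈ I → b ∈ I → a ≤ b →
      AEMeasurable w₂ (volume.restrict (Ioc a b)) := by
    intro a b ha hb hab
    exact ((hw₂cont a b ha hb hab).mono Ioc_subset_Icc_self).aemeasurable measurableSet_Ioc
  have hw₂bd : ∀ a b : ℝ, a ∈ I → b ∈ I → a ≤ b → ∃ C, ∀ x ∈ Icc a b, |w₂ x| ≤ C := by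
    intro a b ha hb hab
    obtain ⟨C, hC⟩ := isCompact_Icc.exists_bound_of_continuousOn (hw₂cont a b ha hb hab)
    exact ⟨C, fun x hx => by simpa [Real.norm_eq_abs] using hC x hx⟩
  -- interval integrability of hfun
  have hhfunint : ∀ a b : ℝ, a ∈ I → b ∈ I → a ≤ b → IntervalIntegrable hfun volume a b := by
    intro a b ha hb hab
    apply hIntBdd _ _ _ hab
    · rw [hhfun]
      exact ((aemeasurable_id.mul ((measurable_deriv φ).aemeasurable.pow_const 2)).div
        ((hφm a b ha hb).pow_const 2)).aestronglyMeasurable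
    · obtain ⟨K, hK⟩ := hφ'bd a b ha hb hab
      refine ⟨b * K ^ 2 / (φ a) ^ 2, ?_⟩
      intro t ht'
      have ht : t ∈ I := hsubI a b ha hb ht'
      have hφa : 0 < φ a := (hpos a ha).1
      have hφat : φ a ≤ φ t := (hmono ha ht ht'.1).le
      have hK' := hK t ⟨ht'.1.le, ht'.2⟩
      have hKnn : 0 ≤ K := le_trans (abs_nonneg _) hK'
      have h1 : |hfun t| = t * deriv φ t ^ 2 / φ t ^ 2 := by
        rw [abs_of_nonneg (hhfun_nonneg t ht.1.le)]
      rw [h1]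
      have h2 : deriv φ t ^ 2 ≤ K ^ 2 := by
        have := sq_abs (deriv φ t)
        nlinarith [abs_nonneg (deriv φ t)]
      apply div_le_div₀ (by nlinarith [hb.1, sq_nonneg K]) ?_ (pow_pos hφa 2) (by nlinarith)
      nlinarith [ht'.2, sq_nonneg (deriv φ t), ht.1.le]
  -- interval integrability of (1 - 2 g) * w₂
  have hgw₂int : ∀ a b : ℝ, a ∈ I → b ∈ I → a ≤ b →
      IntervalIntegrable (fun t => (1 - 2 * g t) * w₂ t) volume a b := by
    intro a b ha hb hab
    apply hIntBdd _ _ _ hab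
    · exact (((aemeasurable_const.sub ((hgm a b ha hb).const_mul 2))).mul
        (hw₂m a b ha hb hab)).aestronglyMeasurable
    · obtain ⟨C, hC⟩ := hw₂bd a b ha hb hab
      refine ⟨(1 + 2 * max (g a) (g b)) * C, ?_⟩
      intro t ht'
      have ht : t ∈ I := hsubI a b ha hb ht'
      have h1 : g t ≤ max (g a) (g b) := hgbd a b ha hb t ⟨ht'.1.le, ht'.2⟩
      have h2 : 0 ≤ g t := hg_nonneg t ht
      have h3 := hC t ⟨ht'.1.le, ht'.2⟩
      have h4 : |1 - 2 * g t| ≤ 1 + 2 * max (g a) (g b) := by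
        rw [abs_le]; constructor <;> nlinarith
      rw [abs_mul]
      have h5 : 0 ≤ |w₂ t| := abs_nonneg _
      nlinarith [abs_nonneg (1 - 2 * g t)]
  -- derivative of A := log(φ)^2/log
  have hAderiv : ∀ t ∈ I, HasDerivAt (fun s => Real.log (φ s) ^ 2 / Real.log s)
      (-((1 - 2 * g t) * w₂ t)) t := by
    intro t ht
    have h1 : φ t ≠ 0 := ne_of_gt (hpos t ht).1
    have h2 : Real.log (φ t) ≠ 0 := ne_of_lt (hlogφ t ht)
    have h3 : Real.log t ≠ 0 := ne_of_lt (hlogt t ht)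
    have h4 : t ≠ 0 := ne_of_gt ht.1
    have hnum := ((hdiff t ht).hasDerivAt.log h1).pow 2
    have hden : HasDerivAt Real.log t⁻¹ t := Real.hasDerivAt_log h4
    have hd := hnum.div hden h3
    convert hd using 1
    all_goals try rfl
    rw [hw₂, hg]
    simp only [sq_abs, div_pow, pow_one, Nat.cast_ofNat, Pi.pow_apply]
    field_simp
    ring
  -- SMALL case
  have hSmall : ∀ c ∈ I, (∀ t ∈ Ioc 0 c, g t ≤ 1/4) → (¬ TT w₂ c) ∧ (¬ TT hfun c) := by
    intro c hc hsm
    have hsub : ∀ δ, δ ∈ Ioo 0 c → δ ∈ I := fun δ hδ => ⟨hδ.1, hδ.2.trans hc.2⟩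
    have hFTC : ∀ δ ∈ Ioo 0 c, (∫ x in δ..c, (1 - 2*g x) * w₂ x)
        = Real.log (φ δ)^2/Real.log δ - Real.log (φ c)^2/Real.log c := by
      intro δ hδ
      have hint : IntervalIntegrable (fun x => -((1 - 2*g x) * w₂ x)) volume δ c :=
        (hgw₂int δ c (hsub δ hδ) hc hδ.2.le).neg
      have hder : ∀ x ∈ uIcc δ c, HasDerivAt (fun s => Real.log (φ s) ^ 2 / Real.log s)
          (-((1 - 2 * g x) * w₂ x)) x := by
        intro x hx
        rw [uIcc_of_le hδ.2.le] at hx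
        exact hAderiv x ⟨hδ.1.trans_le hx.1, lt_of_le_of_lt hx.2 hc.2⟩
      have hres := intervalIntegral.integral_eq_sub_of_hasDerivAt hder hint
      rw [intervalIntegral.integral_neg] at hres
      linarith [hres]
    have hK : ∀ δ ∈ Ioo 0 c, (∫ x in δ..c, w₂ x) ≤ -(2*(Real.log (φ c)^2/Real.log c)) := by
      intro δ hδ
      have hδI := hsub δ hδ
      have h1 : (∫ x in δ..c, w₂ x) ≤ ∫ x in δ..c, 2*((1-2*g x) * w₂ x) := by
        apply integral_mono_on hδ.2.le (hw₂int δ c hδI hc hδ.2.le)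
          ((hgw₂int δ c hδI hc hδ.2.le).const_mul 2)
        intro x hx
        have hxI : x ∈ I := ⟨hδ.1.trans_le hx.1, lt_of_le_of_lt hx.2 hc.2⟩
        have hg4 := hsm x ⟨hδ.1.trans_le hx.1, hx.2⟩
        nlinarith [hw₂_nonneg x hxI]
      rw [intervalIntegral.integral_const_mul, hFTC δ hδ] at h1
      have hAδ : Real.log (φ δ)^2/Real.log δ ≤ 0 :=
        div_nonpos_iff.2 (Or.inl ⟨sq_nonneg _, (hlogt δ hδI).le⟩)
      linarith
    constructor
    · exact not_TT_of_bounded hc.1 (fun δ h0 hδc => hK δ ⟨h0, hδc⟩)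
    · apply not_TT_of_bounded hc.1
      intro δ h0 hδc
      have hδI : δ ∈ I := ⟨h0, hδc.trans hc.2⟩
      calc (∫ x in δ..c, hfun x) ≤ ∫ x in δ..c, w₂ x := by
            apply integral_mono_on hδc.le (hhfunint δ c hδI hc hδc.le) (hw₂int δ c hδI hc hδc.le)
            intro x hx
            have hxI : x ∈ I := ⟨h0.trans_le hx.1, lt_of_le_of_lt hx.2 hc.2⟩
            rw [h_eq x hxI]
            have hg4 := hsm x ⟨h0.trans_le hx.1, hx.2⟩
            have hg0 := hg_nonneg x hxI
            have h8 : g x^2*w₂ x ≤ 1 * w₂ x :=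
              mul_le_mul_of_nonneg_right (by nlinarith) (hw₂_nonneg x hxI)
            linarith
        _ ≤ -(2*(Real.log (φ c)^2/Real.log c)) := hK δ ⟨h0, hδc⟩
  -- MID case
  have hMid : ∀ c ∈ I, ∀ m M : ℝ, 0 < m →
      (∀ t ∈ Ioc 0 c, m ≤ g t ∧ g t ≤ M) → (TT hfun c ↔ TT w₂ c) := by
    intro c hc m M hm hbd
    have hM : 0 < M := lt_of_lt_of_le hm
      ((hbd c ⟨hc.1, le_rfl⟩).1.trans (hbd c ⟨hc.1, le_rfl⟩).2)
    constructor
    · intro h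
      have h2 : TT (fun t => M^2 * w₂ t) c := by
        apply TT_mono hc.1 (fun δ h0 hδc => hhfunint δ c ⟨h0, hδc.trans_lt hc.2⟩ hc hδc)
          (fun δ h0 hδc => (hw₂int δ c ⟨h0, hδc.trans_lt hc.2⟩ hc hδc).const_mul _) _ h
        intro t ht'
        have htI : t ∈ I := ⟨ht'.1, lt_of_le_of_lt ht'.2 hc.2⟩
        rw [h_eq t htI]
        have h5 := hbd t ht'
        have h6 := hw₂_nonneg t htI
        have h7 := hg_nonneg t htI
        exact mul_le_mul_of_nonneg_right (pow_le_pow_left₀ h7 h5.2 2) h6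
      exact (TT_const_mul_iff (pow_pos hM 2)).1 h2
    · intro h
      have h2 : TT (fun t => m^2 * w₂ t) c := (TT_const_mul_iff (pow_pos hm 2)).2 h
      apply TT_mono hc.1
        (fun δ h0 hδc => (hw₂int δ c ⟨h0, hδc.trans_lt hc.2⟩ hc hδc).const_mul _)
        (fun δ h0 hδc => hhfunint δ c ⟨h0, hδc.trans_lt hc.2⟩ hc hδc) _ h2
      intro t ht'
      have htI : t ∈ I := ⟨ht'.1, lt_of_le_of_lt ht'.2 hc.2⟩
      rw [h_eq t htI]
      have h5 := hbd t ht'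
      have h6 := hw₂_nonneg t htI
      exact mul_le_mul_of_nonneg_right (pow_le_pow_left₀ hm.le h5.1 2) h6
  -- BIG case
  have hBig : ∀ c ∈ I, (∀ t ∈ Ioc 0 c, 2 ≤ g t) → TT w₂ c ∧ TT hfun c := by
    intro c hc hbig
    have hsubIc : Ioc 0 c ⊆ I := fun x hx => ⟨hx.1, lt_of_le_of_lt hx.2 hc.2⟩
    set D : ℝ → ℝ := fun t => Real.log (-Real.log (φ t)) - 2 * Real.log (-Real.log t) with hD
    have hDd : ∀ t ∈ I, HasDerivAt D ((g t - 2)/(t * Real.log t)) t := by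
      intro t ht
      have h1 : φ t ≠ 0 := ne_of_gt (hpos t ht).1
      have h2 : -Real.log (φ t) ≠ 0 := ne_of_gt (by linarith [hlogφ t ht])
      have h3 : Real.log t ≠ 0 := ne_of_lt (hlogt t ht)
      have h3' : -Real.log t ≠ 0 := ne_of_gt (by linarith [hlogt t ht])
      have h4 : t ≠ 0 := ne_of_gt ht.1
      have p1 : HasDerivAt (fun s => -Real.log (φ s)) (-(deriv φ t / φ t)) t :=
        ((hdiff t ht).hasDerivAt.log h1).neg
      have p2 := p1.log h2
      have q1 : HasDerivAt (fun s : ℝ => -Real.log s) (-t⁻¹) t := (Real.hasDerivAt_log h4).neg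
      have q2 := (q1.log h3').const_mul 2
      have pq := p2.sub q2
      convert pq using 1
      all_goals try rfl
      rw [hg]
      field_simp
    have hanti : AntitoneOn D (Ioc 0 c) := by
      apply antitoneOn_of_deriv_nonpos (convex_Ioc 0 c)
      · exact fun t ht => (hDd t (hsubIc ht)).continuousAt.continuousWithinAt
      · intro t ht
        rw [interior_Ioc] at ht
        exact (hDd t (hsubIc (Ioo_subset_Ioc_self ht))).differentiableAt.differentiableWithinAt
      · intro t ht
        rw [interior_Ioc] at ht
        have htI := hsubIc (Ioo_subset_Ioc_self ht)
        rw [(hDd t htI).deriv, div_nonpos_iff]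
        left
        constructor
        · linarith [hbig t (Ioo_subset_Ioc_self ht)]
        · nlinarith [hlogt t htI, htI.1]
    set k := (-Real.log (φ c)) / (-Real.log c)^2 with hk
    have hlogc := hlogt c hc
    have hlogφc := hlogφ c hc
    have hkpos : 0 < k := by
      rw [hk]; apply div_pos (by linarith) (by nlinarith [hlogc])
    have hlow : ∀ t ∈ Ioc 0 c, k^2 * (Real.log t^2 / t) ≤ w₂ t := by
      intro t ht'
      have htI := hsubIc ht'
      have hXpos : 0 < -Real.log (φ t) := by linarith [hlogφ t htI]
      have hltpos : 0 < -Real.log t := by linarith [hlogt t htI]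
      have hYpos : 0 < k * (-Real.log t)^2 := by positivity
      have hDge : D c ≤ D t := hanti ht' ⟨hc.1, le_rfl⟩ ht'.2
      have hlogY : Real.log (k * (-Real.log t)^2)
          = Real.log (-Real.log (φ c)) - 2*Real.log (-Real.log c)
            + 2*Real.log (-Real.log t) := by
        rw [Real.log_mul (ne_of_gt hkpos) (by nlinarith [hltpos] : (0:ℝ) < (-Real.log t)^2).ne', hk,
          Real.log_div (by linarith) (by nlinarith [hlogc] : (0:ℝ) < (-Real.log c)^2).ne',
          Real.log_pow, Real.log_pow]
        push_cast
        ring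
      have hXY : k * (-Real.log t)^2 ≤ -Real.log (φ t) := by
        rw [← Real.log_le_log_iff hYpos hXpos, hlogY]
        simp only [hD] at hDge
        linarith
      have hw₂eq : w₂ t = Real.log (φ t)^2 / Real.log t^2 / t := by
        rw [hw₂]
        simp [sq_abs, div_pow, div_div]
      rw [hw₂eq]
      have h3 : Real.log t ≠ 0 := ne_of_lt (hlogt t htI)
      have hltsq : Real.log t ^ 2 ≠ 0 := pow_ne_zero 2 h3
      have e2 : k^2 * (Real.log t^2/t) = (k*(-Real.log t)^2)^2/Real.log t^2/t := by
        have ht0 : t ≠ 0 := ne_of_gt ht'.1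
        rw [div_div, eq_div_iff (mul_ne_zero hltsq ht0)]
        field_simp
      rw [e2]
      have hnum : (k*(-Real.log t)^2)^2 ≤ Real.log (φ t)^2 := by
        have hp := pow_le_pow_left₀ hYpos.le hXY 2
        calc (k*(-Real.log t)^2)^2 ≤ (-Real.log (φ t))^2 := hp
          _ = Real.log (φ t)^2 := by ring
      have hlt2 : 0 < Real.log t^2 := by nlinarith [hlogt t htI]
      exact div_le_div_of_nonneg_right ((div_le_div_iff_of_pos_right hlt2).2 hnum) ht'.1.le
    have hTw₂ : TT w₂ c := by
      have h1 : TT (fun t => k^2 * (Real.log t^2/t)) c :=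
        (TT_const_mul_iff (pow_pos hkpos 2)).2 (TT_log_sq hc.1 (hc.2.trans ht₀1))
      apply TT_mono hc.1 ?_ (fun δ h0 hδc => hw₂int δ c ⟨h0, hδc.trans_lt hc.2⟩ hc hδc) hlow h1
      intro δ h0 hδc
      apply ContinuousOn.intervalIntegrable
      rw [uIcc_of_le hδc]
      apply ContinuousOn.mul continuousOn_const
      apply ContinuousOn.div
      · exact (Real.continuousOn_log.mono (fun x hx => ne_of_gt (h0.trans_le hx.1))).pow 2
      · exact continuousOn_id
      · exact fun x hx => ne_of_gt (h0.trans_le hx.1)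
    refine ⟨hTw₂, ?_⟩
    apply TT_mono hc.1 (fun δ h0 hδc => hw₂int δ c ⟨h0, hδc.trans_lt hc.2⟩ hc hδc)
      (fun δ h0 hδc => hhfunint δ c ⟨h0, hδc.trans_lt hc.2⟩ hc hδc) _ hTw₂
    intro t ht'
    have htI : t ∈ I := hsubIc ht'
    rw [h_eq t htI]
    have h5 := hbig t ht'
    have h6 := hw₂_nonneg t htI
    have h7 : 1 * w₂ t ≤ g t ^ 2 * w₂ t :=
      mul_le_mul_of_nonneg_right (by nlinarith) h6
    linarith

  -- membership facts for r₀
  have hr₀I : r₀ ∈ I := ⟨hr₀, hr₀t₀⟩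
  have haI : u r₀ ∈ I := (hu_inv r₀ hr₀I).2.2
  -- change of variables for the left-hand side
  have hCOV : ∀ ε ∈ Ioo (0:ℝ) r₀, (∫ t in ε..r₀, (u t / deriv u t) / t ^ 2)
      = ∫ s in (u ε)..(u r₀), hfun s := by
    intro ε hε
    have hεI : ε ∈ I := ⟨hε.1, hε.2.trans hr₀t₀⟩
    have huεI : u ε ∈ I := (hu_inv ε hεI).2.2
    have huu : u ε < u r₀ := husm hεI hr₀I hε.2
    have hIccI : Icc (u ε) (u r₀) ⊆ I :=
      fun x hx => ⟨lt_of_lt_of_le huεI.1 hx.1, lt_of_le_of_lt hx.2 haI.2⟩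
    have hIooI : Ioo (u ε) (u r₀) ⊆ I := fun x hx => hIccI (Ioo_subset_Icc_self hx)
    have himg : φ '' (Ioo (u ε) (u r₀)) = Ioo ε r₀ := by
      apply Subset.antisymm
      · rintro y ⟨x, hx, rfl⟩
        have hxI := hIooI hx
        constructor
        · have := hmono huεI hxI hx.1
          rwa [(hu_inv ε hεI).1] at this
        · have := hmono hxI haI hx.2
          rwa [(hu_inv r₀ hr₀I).1] at this
      · intro y hy
        have h1 : Ioo (φ (u ε)) (φ (u r₀)) ⊆ φ '' Ioo (u ε) (u r₀) :=
          intermediate_value_Ioo huu.le (hφc.mono hIccI)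
        apply h1
        rw [(hu_inv ε hεI).1, (hu_inv r₀ hr₀I).1]
        exact hy
    have h2 : (∫ t in ε..r₀, (u t / deriv u t) / t ^ 2)
        = ∫ t in Ioo ε r₀, (u t / deriv u t) / t ^ 2 := by
      rw [intervalIntegral.integral_of_le hε.2.le, MeasureTheory.integral_Ioc_eq_integral_Ioo]
    have h3 : (∫ s in (u ε)..(u r₀), hfun s) = ∫ s in Ioo (u ε) (u r₀), hfun s := by
      rw [intervalIntegral.integral_of_le huu.le, MeasureTheory.integral_Ioc_eq_integral_Ioo]
    rw [h2, h3, ← himg]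
    rw [MeasureTheory.integral_image_eq_integral_abs_deriv_smul measurableSet_Ioo
      (fun x hx => ((hdiff x (hIooI hx)).hasDerivAt).hasDerivWithinAt)
      (hmono.injOn.mono hIooI)]
    apply MeasureTheory.setIntegral_congr_fun measurableSet_Ioo
    intro x hx
    have hxI := hIooI hx
    have hφxIoo : φ x ∈ Ioo ε r₀ := by rw [← himg]; exact mem_image_of_mem φ hx
    have hφxI : φ x ∈ I := ⟨lt_trans hε.1 hφxIoo.1, hφxIoo.2.trans hr₀t₀⟩
    have hux : u (φ x) = x := (hu_inv x hxI).2.1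
    have hchx := hchain (φ x) hφxI
    rw [hux] at hchx
    have hdune : deriv u (φ x) ≠ 0 := ne_of_gt (hu_deriv_pos (φ x) hφxI)
    have hdpos : 0 < deriv φ x := by
      rcases lt_trichotomy (deriv φ x) 0 with h | h | h
      · nlinarith [hu_deriv_pos (φ x) hφxI]
      · rw [h] at hchx; simp at hchx
      · exact h
    have hdu : deriv u (φ x) = (deriv φ x)⁻¹ := by
      field_simp
      linarith [hchx]
    simp only [smul_eq_mul, hhfun]
    rw [hux, hdu, abs_of_pos hdpos]
    have hφx0 : φ x ≠ 0 := ne_of_gt (hpos x hxI).1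
    field_simp
  -- reduction of the left-hand side
  have hLHSiff : Tendsto (fun ε => ∫ t in ε..r₀, (u t / deriv u t) / t ^ 2)
      (nhdsWithin 0 (Ioi 0)) atTop ↔ TT hfun (u r₀) := by
    constructor
    · intro hT
      rw [TT, tendsto_atTop]
      intro M
      have h1 := (tendsto_atTop.1 hT) M
      obtain ⟨ε₀, hε₀, hsubset⟩ := mem_nhdsGT_iff_exists_Ioo_subset.1 h1
      set ε₁ := min ε₀ r₀ / 2 with hε₁def
      have hminpos : 0 < min ε₀ r₀ := lt_min hε₀ hr₀
      have hε₁r : ε₁ ∈ Ioo (0:ℝ) r₀ := by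
        constructor
        · positivity
        · have := min_le_right ε₀ r₀; rw [hε₁def]; linarith
      have hε₁' : ε₁ ∈ Ioo (0:ℝ) ε₀ := by
        constructor
        · positivity
        · have := min_le_left ε₀ r₀; rw [hε₁def]; linarith
      have hM : M ≤ ∫ t in ε₁..r₀, (u t / deriv u t) / t ^ 2 := hsubset hε₁'
      rw [hCOV ε₁ hε₁r] at hM
      have hε₁I : ε₁ ∈ Ioo 0 t₀ := ⟨hε₁r.1, hε₁r.2.trans hr₀t₀⟩
      have huε₁I : u ε₁ ∈ I := (hu_inv ε₁ hε₁I).2.2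
      filter_upwards [Ioo_mem_nhdsWithin_Ioi
        (⟨le_rfl, huε₁I.1⟩ : (0:ℝ) ∈ Ico 0 (u ε₁))] with δ hδ
      have hδI : δ ∈ I := ⟨hδ.1, hδ.2.trans huε₁I.2⟩
      have hi1 : IntervalIntegrable hfun volume δ (u ε₁) :=
        hhfunint δ (u ε₁) hδI huε₁I hδ.2.le
      have hi2 : IntervalIntegrable hfun volume (u ε₁) (u r₀) :=
        hhfunint _ _ huε₁I haI (husm hε₁I hr₀I hε₁r.2).le
      rw [← intervalIntegral.integral_add_adjacent_intervals hi1 hi2]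
      have hpos1 : 0 ≤ ∫ s in δ..(u ε₁), hfun s :=
        intervalIntegral.integral_nonneg hδ.2.le
          (fun x hx => hhfun_nonneg x (hδ.1.le.trans hx.1))
      linarith
    · intro hT
      have hcomp := hT.comp hu0
      apply Tendsto.congr' _ hcomp
      filter_upwards [Ioo_mem_nhdsWithin_Ioi (⟨le_rfl, hr₀⟩ : (0:ℝ) ∈ Ico 0 r₀)] with ε hε
      exact (hCOV ε hε).symm
  refine Iff.trans hLHSiff ?_
  show TT hfun (u r₀) ↔ TT w₂ r₀
  -- produce a common cutoff with the equivalence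
  obtain ⟨c', hc'I, hc'a, hc'r, hiff⟩ :
      ∃ c', c' ∈ I ∧ c' ≤ u r₀ ∧ c' ≤ r₀ ∧ (TT hfun c' ↔ TT w₂ c') := by
    by_cases hsmall : ∃ c, c ∈ I ∧ ∀ t ∈ Ioc 0 c, g t ≤ 1/4
    · obtain ⟨c, hc, hsm⟩ := hsmall
      refine ⟨min c (min (u r₀) r₀), ⟨lt_min hc.1 (lt_min haI.1 hr₀),
        lt_of_le_of_lt (min_le_left _ _) hc.2⟩,
        (min_le_right _ _).trans (min_le_left _ _),
        (min_le_right _ _).trans (min_le_right _ _), ?_⟩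
      have hS := hSmall _ ⟨lt_min hc.1 (lt_min haI.1 hr₀),
        lt_of_le_of_lt (min_le_left _ _) hc.2⟩
        (fun t ht => hsm t ⟨ht.1, ht.2.trans (min_le_left _ _)⟩)
      exact iff_of_false hS.2 hS.1
    · push_neg at hsmall
      have hc₀I : min (u r₀) r₀ ∈ I := ⟨lt_min haI.1 hr₀,
        lt_of_le_of_lt (min_le_right _ _) hr₀t₀⟩
      rcases hreg with Hmon | Hant
      · -- g is > 1/4 everywhere on I
        have hgt : ∀ t ∈ I, 1/4 < g t := by
          intro t ht
          have ht2I : t/2 ∈ I := ⟨by linarith [ht.1], by linarith [ht.1, ht.2]⟩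
          obtain ⟨t', ht', hgt'⟩ := hsmall (t/2) ht2I
          have ht'I : t' ∈ I := ⟨ht'.1, lt_of_le_of_lt ht'.2 ht2I.2⟩
          calc 1/4 < g t' := hgt'
            _ ≤ g t := Hmon ht'I ht (ht'.2.trans (by linarith [ht.1]))
        refine ⟨min (u r₀) r₀, hc₀I, min_le_left _ _, min_le_right _ _, ?_⟩
        apply hMid _ hc₀I (1/4) (g (min (u r₀) r₀)) (by norm_num)
        intro t ht
        have htI : t ∈ I := ⟨ht.1, lt_of_le_of_lt ht.2 hc₀I.2⟩
        exact ⟨(hgt t htI).le, Hmon htI hc₀I ht.2⟩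
      · by_cases hbig' : ∃ c, c ∈ I ∧ 2 ≤ g c
        · obtain ⟨c₂, hc₂I, hg2⟩ := hbig'
          have hcI : min c₂ (min (u r₀) r₀) ∈ I := ⟨lt_min hc₂I.1 hc₀I.1,
            lt_of_le_of_lt (min_le_left _ _) hc₂I.2⟩
          refine ⟨min c₂ (min (u r₀) r₀), hcI,
            (min_le_right _ _).trans (min_le_left _ _),
            (min_le_right _ _).trans (min_le_right _ _), ?_⟩
          have hB := hBig _ hcI ?_
          · exact iff_of_true hB.2 hB.1
          · intro t ht
            have htI : t ∈ I := ⟨ht.1, lt_of_le_of_lt ht.2 hcI.2⟩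
            calc (2:ℝ) ≤ g c₂ := hg2
              _ ≤ g t := Hant htI hc₂I (ht.2.trans (min_le_left _ _))
        · push_neg at hbig'
          obtain ⟨t₁, ht₁, hgt₁⟩ := hsmall _ hc₀I
          have ht₁I : t₁ ∈ I := ⟨ht₁.1, lt_of_le_of_lt ht₁.2 hc₀I.2⟩
          refine ⟨t₁, ht₁I, ht₁.2.trans (min_le_left _ _),
            ht₁.2.trans (min_le_right _ _), ?_⟩
          apply hMid _ ht₁I (1/4) 2 (by norm_num)
          intro t ht
          have htI : t ∈ I := ⟨ht.1, lt_of_le_of_lt ht.2 ht₁I.2⟩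
          refine ⟨le_trans hgt₁.le (Hant htI ht₁I ht.2), (hbig' t htI).le⟩
  have e1 : TT hfun c' ↔ TT hfun (u r₀) :=
    TT_congr_upper hc'I.1 hc'a
      (fun δ h0 hδc => hhfunint δ (u r₀) ⟨h0, lt_of_le_of_lt hδc hc'I.2⟩ haI (hδc.trans hc'a))
  have e2 : TT w₂ c' ↔ TT w₂ r₀ :=
    TT_congr_upper hc'I.1 hc'r
      (fun δ h0 hδc => hw₂int δ r₀ ⟨h0, lt_of_le_of_lt hδc hc'I.2⟩ hr₀I (hδc.trans hc'r))
  exact e1.symm.trans (hiff.trans e2)
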